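/- Let B be a Boolean algebra, A an ℵ₀-ideal subalgebra of B, and ℐ an ideal of B that is generated by ℐ ∩ A. Then A/ℐ (i.e., the image of A in the quotient B/ℐ) is an ℵ₀-ideal subalgebra of B/ℐ. -/

import Mathlib

/-- `A` is a (Boolean) subalgebra of the ambient Boolean algebra. -/
def IsSubalg {B : Type*} [BooleanAlgebra B] (A : Set B) : Prop :=
  ⊥ ∈ A ∧ ⊤ ∈ A ∧ (∀ x ∈ A, ∀ y ∈ A, x ⊔ y ∈ A) ∧ (∀ x ∈ A, ∀ y ∈ A, x ⊓ y ∈ A) ∧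
    ∀ x ∈ A, xᶜ ∈ A

/-- `A` is ℵ₀-ideal relative to `S`: for every `b ∈ S \ A` the ideal
`{a ∈ A : a ≤ b}` has a countable cofinal subset. -/
def Aleph0IdealIn {B : Type*} [BooleanAlgebra B] (A S : Set B) : Prop :=
  ∀ b ∈ S, b ∉ A → ∃ C : Set B, C.Countable ∧ C ⊆ A ∧ (∀ c ∈ C, c ≤ b) ∧
    ∀ a ∈ A, a ≤ b → ∃ c ∈ C, a ≤ c

/-- `A` is an ℵ₀-ideal subalgebra of the whole algebra. -/
def Aleph0Ideal {B : Type*} [BooleanAlgebra B] (A : Set B) : Prop :=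
  Aleph0IdealIn A Set.univ


/-- Quotients by ideals generated within an ℵ₀-ideal subalgebra.  The quotient `B/ℐ` is
represented by a surjective homomorphism `π : B → Q` of Boolean algebras whose kernel is
`ℐ`; the hypothesis `hgen` says that the kernel ideal is generated by its intersection
with `A`.  Conclusion: `A/ℐ = π '' A` is an ℵ₀-ideal subalgebra of `B/ℐ = Q`. -/
theorem quotient_aleph0Ideal {B Q : Type*} [BooleanAlgebra B] [BooleanAlgebra Q]
    (π : BoundedLatticeHom B Q) (hsurj : Function.Surjective π)
    (A : Set B) (hA : IsSubalg A) (hAid : Aleph0Ideal A)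
    (hgen : ∀ x : B, π x = ⊥ → ∃ a ∈ A, π a = ⊥ ∧ x ≤ a) :
    Aleph0Ideal (π '' A) := by
  have hmono : Monotone π := fun x y hxy => by
    have : π x ⊔ π y = π y := by rw [← map_sup, sup_eq_right.mpr hxy]
    exact le_of_sup_eq this
  have hcompl : ∀ x : B, π xᶜ = (π x)ᶜ := fun x => by
    have h : IsCompl (π x) (π xᶜ) := by
      constructor
      · rw [disjoint_iff, ← map_inf, inf_compl_eq_bot, map_bot]
      · rw [codisjoint_iff, ← map_sup, sup_compl_eq_top, map_top]
    exact (h.compl_eq).symm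
  intro q _ hq
  obtain ⟨b, rfl⟩ := hsurj q
  have hbA : b ∉ A := fun hb => hq ⟨b, hb, rfl⟩
  obtain ⟨C, hCc, hCA, hCle, hCcof⟩ := hAid b (Set.mem_univ b) hbA
  refine ⟨π '' C, hCc.image π, Set.image_mono hCA, ?_, ?_⟩
  · rintro _ ⟨c, hc, rfl⟩
    exact hmono (hCle c hc)
  · rintro _ ⟨a, haA, rfl⟩ hle
    have hbot : π (a ⊓ bᶜ) = ⊥ := by
      rw [map_inf, hcompl]
      exact le_bot_iff.mp (le_trans (inf_le_inf_right _ hle) (le_of_eq inf_compl_eq_bot))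
    obtain ⟨d, hdA, hdbot, hdle⟩ := hgen _ hbot
    have hadc : a ⊓ dᶜ ∈ A := hA.2.2.2.1 a haA dᶜ (hA.2.2.2.2 d hdA)
    have hadcb : a ⊓ dᶜ ≤ b := by
      rw [← sdiff_eq_bot_iff, sdiff_eq]
      have : a ⊓ bᶜ ⊓ dᶜ ≤ d ⊓ dᶜ := inf_le_inf_right _ hdle
      rw [inf_compl_eq_bot, le_bot_iff] at this
      rw [inf_right_comm]; exact this
    obtain ⟨c, hcC, hac⟩ := hCcof _ hadc hadcb
    refine ⟨π c, ⟨c, hcC, rfl⟩, ?_⟩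
    have : a = (a ⊓ d) ⊔ (a ⊓ dᶜ) := by
      rw [← inf_sup_left, sup_compl_eq_top, inf_top_eq]
    calc π a = π (a ⊓ d) ⊔ π (a ⊓ dᶜ) := by rw [← map_sup, ← this]
      _ ≤ ⊥ ⊔ π c := sup_le_sup (by rw [map_inf, hdbot]; exact inf_le_right) (hmono hac)
      _ = π c := bot_sup_eq _
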